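/- Let (θ₁, φ₁), (θ₂, φ₂), (θ₃, φ₃) be independent, each uniformly distributed on [0,2π]², and set hᵢ := sin θᵢ·sin φᵢ. Then for every real a and all real s₁, s₂, E[cos(s₁·a·(h₁ − h₃) + s₂·a·(h₂ − h₃))] = J₀(s₁·a/2)² · J₀(s₂·a/2)² · J₀((s₁ + s₂)·a/2)². -/

import Mathlib

open Real MeasureTheory Finset

/-- Bessel function of the first kind of order zero (integral representation). -/
noncomputable def J₀ (x : ℝ) : ℝ :=
  (1 / (2 * π)) * ∫ t in (0:ℝ)..(2 * π), Real.cos (x * Real.sin t)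

/-- Expectation over three independent pairs of angles, each uniform on `[0, 2π]²`. -/
noncomputable def E6 (f : ℝ → ℝ → ℝ → ℝ → ℝ → ℝ → ℝ) : ℝ :=
  (1 / (2 * π) ^ 6) *
    ∫ θ₁ in (0:ℝ)..(2 * π), ∫ φ₁ in (0:ℝ)..(2 * π),
      ∫ θ₂ in (0:ℝ)..(2 * π), ∫ φ₂ in (0:ℝ)..(2 * π),
        ∫ θ₃ in (0:ℝ)..(2 * π), ∫ φ₃ in (0:ℝ)..(2 * π), f θ₁ φ₁ θ₂ φ₂ θ₃ φ₃

/-! ### Auxiliary lemmas -/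

lemma shift_int (f : ℝ → ℝ) (hf : Function.Periodic f (2 * π)) (c : ℝ) :
    ∫ x in (0:ℝ)..(2 * π), f (x + c) = ∫ x in (0:ℝ)..(2 * π), f x := by
  rw [intervalIntegral.integral_comp_add_right]
  have h := hf.intervalIntegral_add_eq c 0
  simpa [add_comm] using h

lemma antiperiod_int (f : ℝ → ℝ) (hf : Continuous f) (hodd : ∀ x, f (x + π) = - f x) :
    ∫ x in (0:ℝ)..(2 * π), f x = 0 := by
  have h1 : ∫ x in (0:ℝ)..(2 * π), f x
      = (∫ x in (0:ℝ)..π, f x) + ∫ x in π..(2 * π), f x :=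
    (intervalIntegral.integral_add_adjacent_intervals
      (hf.intervalIntegrable _ _) (hf.intervalIntegrable _ _)).symm
  have h2 : ∫ x in π..(2 * π), f x = ∫ x in (0:ℝ)..π, f (x + π) := by
    rw [intervalIntegral.integral_comp_add_right]
    norm_num [two_mul]
  have h3 : ∫ x in (0:ℝ)..π, f (x + π) = - ∫ x in (0:ℝ)..π, f x := by
    simp only [hodd, intervalIntegral.integral_neg]
  rw [h1, h2, h3]; ring

lemma sin_sin_int (z : ℝ) : ∫ t in (0:ℝ)..(2 * π), Real.sin (z * Real.sin t) = 0 := by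
  apply antiperiod_int _ (by fun_prop)
  intro x
  rw [Real.sin_add_pi]
  simp [mul_neg]

lemma sin_cos_int (z : ℝ) : ∫ t in (0:ℝ)..(2 * π), Real.sin (z * Real.cos t) = 0 := by
  apply antiperiod_int _ (by fun_prop)
  intro x
  rw [Real.cos_add_pi]
  simp [mul_neg]

lemma cos_sin_int (z : ℝ) : ∫ t in (0:ℝ)..(2 * π), Real.cos (z * Real.sin t) = 2 * π * J₀ z := by
  have hπ : (2 * π) ≠ 0 := by positivity
  rw [J₀]; field_simp

lemma cos_cos_int (z : ℝ) : ∫ t in (0:ℝ)..(2 * π), Real.cos (z * Real.cos t) = 2 * π * J₀ z := by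
  have hper : Function.Periodic (fun x => Real.cos (z * Real.sin x)) (2 * π) := by
    intro x; simp [Real.sin_periodic x]
  have h := shift_int (fun x => Real.cos (z * Real.sin x)) hper (π / 2)
  rw [← cos_sin_int z, ← h]
  apply intervalIntegral.integral_congr
  intro x _
  show Real.cos (z * Real.cos x) = Real.cos (z * Real.sin (x + π / 2))
  rw [Real.sin_add_pi_div_two]

lemma swap2 (F : ℝ → ℝ → ℝ) (hF : Continuous (Function.uncurry F)) :
    ∫ x in (0:ℝ)..(2 * π), ∫ y in (0:ℝ)..(2 * π), F x y
      = ∫ y in (0:ℝ)..(2 * π), ∫ x in (0:ℝ)..(2 * π), F x y := by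
  have h0 : (0:ℝ) ≤ 2 * π := by positivity
  simp only [intervalIntegral.integral_of_le h0]
  apply MeasureTheory.integral_integral_swap
  rw [Measure.prod_restrict]
  apply (hF.continuousOn.integrableOn_compact (isCompact_Icc.prod isCompact_Icc)).mono_set
  exact Set.prod_mono Set.Ioc_subset_Icc_self Set.Ioc_subset_Icc_self

/-- The key double-integral identity `∬ cos (c sin θ sin φ) = (2π)² J₀(c/2)²`. -/
lemma K_eval (c : ℝ) :
    ∫ θ in (0:ℝ)..(2 * π), ∫ φ in (0:ℝ)..(2 * π), Real.cos (c * (Real.sin θ * Real.sin φ))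
      = (2 * π) ^ 2 * (J₀ (c / 2)) ^ 2 := by
  set z := c / 2 with hz
  -- Step A : rewrite the inner integral using the substitution φ = t + θ
  have stepA : ∀ θ : ℝ,
      (∫ φ in (0:ℝ)..(2 * π), Real.cos (c * (Real.sin θ * Real.sin φ)))
      = ∫ t in (0:ℝ)..(2 * π), Real.cos (z * Real.cos t - z * Real.cos (t + 2 * θ)) := by
    intro θ
    have key : ∀ φ : ℝ, Real.cos (c * (Real.sin θ * Real.sin φ))
        = Real.cos (z * Real.cos ((φ + -θ)) - z * Real.cos ((φ + -θ) + 2 * θ)) := by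
      intro φ
      congr 1
      rw [show (φ + -θ) + 2 * θ = φ + θ by ring, show φ + -θ = φ - θ by ring,
        Real.cos_sub, Real.cos_add, hz]
      ring
    have hper : Function.Periodic
        (fun t => Real.cos (z * Real.cos t - z * Real.cos (t + 2 * θ))) (2 * π) := by
      intro x
      have h1 : Real.cos (x + 2 * π) = Real.cos x := Real.cos_periodic x
      have h2 : Real.cos ((x + 2 * π) + 2 * θ) = Real.cos (x + 2 * θ) := by
        rw [show (x + 2 * π) + 2 * θ = (x + 2 * θ) + 2 * π by ring]
        exact Real.cos_periodic _
      simp only [h1, h2]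
    calc (∫ φ in (0:ℝ)..(2 * π), Real.cos (c * (Real.sin θ * Real.sin φ)))
        = ∫ φ in (0:ℝ)..(2 * π),
            (fun t => Real.cos (z * Real.cos t - z * Real.cos (t + 2 * θ))) (φ + -θ) := by
          apply intervalIntegral.integral_congr
          intro φ _
          exact key φ
      _ = ∫ t in (0:ℝ)..(2 * π), Real.cos (z * Real.cos t - z * Real.cos (t + 2 * θ)) :=
          shift_int _ hper (-θ)
  -- Step C : the θ-integral of the shifted integrand
  have stepC : ∀ t : ℝ,
      (∫ θ in (0:ℝ)..(2 * π), Real.cos (z * Real.cos t - z * Real.cos (t + 2 * θ)))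
      = Real.cos (z * Real.cos t) * (2 * π * J₀ z) := by
    intro t
    have hGc : Continuous (fun w => Real.cos (z * Real.cos t - z * Real.cos w)) := by fun_prop
    have hGp : Function.Periodic (fun w => Real.cos (z * Real.cos t - z * Real.cos w)) (2 * π) := by
      intro x
      simp only [Real.cos_periodic x]
    have h2 := intervalIntegral.integral_comp_mul_add
      (fun w => Real.cos (z * Real.cos t - z * Real.cos w)) (two_ne_zero (α := ℝ)) t
      (a := 0) (b := 2 * π)
    rw [show (2 * 0 + t : ℝ) = t by ring, show (2 * (2 * π) + t : ℝ) = (t + 2 * π) + 2 * π by ring]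
      at h2
    have adj := intervalIntegral.integral_add_adjacent_intervals
      (μ := volume) (a := t) (b := t + 2 * π) (c := (t + 2 * π) + 2 * π)
      (hGc.intervalIntegrable _ _) (hGc.intervalIntegrable _ _)
    have per : (∫ x in (t + 2 * π)..((t + 2 * π) + 2 * π),
          Real.cos (z * Real.cos t - z * Real.cos x))
        = ∫ x in t..(t + 2 * π), Real.cos (z * Real.cos t - z * Real.cos x) :=
      hGp.intervalIntegral_add_eq _ _
    have base : (∫ x in t..(t + 2 * π), Real.cos (z * Real.cos t - z * Real.cos x))
        = ∫ x in (0:ℝ)..(2 * π), Real.cos (z * Real.cos t - z * Real.cos x) := by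
      have := hGp.intervalIntegral_add_eq t 0
      simpa using this
    have value : (∫ x in (0:ℝ)..(2 * π), Real.cos (z * Real.cos t - z * Real.cos x))
        = Real.cos (z * Real.cos t) * (2 * π * J₀ z) := by
      calc (∫ x in (0:ℝ)..(2 * π), Real.cos (z * Real.cos t - z * Real.cos x))
          = ∫ x in (0:ℝ)..(2 * π),
              (Real.cos (z * Real.cos t) * Real.cos (z * Real.cos x)
                + Real.sin (z * Real.cos t) * Real.sin (z * Real.cos x)) := by
            apply intervalIntegral.integral_congr
            intro x _
            show Real.cos (z * Real.cos t - z * Real.cos x) = _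
            rw [Real.cos_sub]
        _ = (∫ x in (0:ℝ)..(2 * π), Real.cos (z * Real.cos t) * Real.cos (z * Real.cos x))
            + ∫ x in (0:ℝ)..(2 * π), Real.sin (z * Real.cos t) * Real.sin (z * Real.cos x) := by
            apply intervalIntegral.integral_add <;>
              exact (by fun_prop : Continuous _).intervalIntegrable _ _
        _ = Real.cos (z * Real.cos t) * (2 * π * J₀ z) := by
            rw [intervalIntegral.integral_const_mul, intervalIntegral.integral_const_mul,
              cos_cos_int, sin_cos_int]
            ring
    have lhs_eq : (∫ θ in (0:ℝ)..(2 * π), Real.cos (z * Real.cos t - z * Real.cos (t + 2 * θ)))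
        = ∫ θ in (0:ℝ)..(2 * π),
            (fun w => Real.cos (z * Real.cos t - z * Real.cos w)) (2 * θ + t) := by
      apply intervalIntegral.integral_congr
      intro θ _
      show Real.cos (z * Real.cos t - z * Real.cos (t + 2 * θ))
          = Real.cos (z * Real.cos t - z * Real.cos (2 * θ + t))
      rw [add_comm t (2 * θ)]
    rw [lhs_eq, h2, ← adj, per, base, value, smul_eq_mul]
    ring
  -- put it together
  calc (∫ θ in (0:ℝ)..(2 * π), ∫ φ in (0:ℝ)..(2 * π), Real.cos (c * (Real.sin θ * Real.sin φ)))
      = ∫ θ in (0:ℝ)..(2 * π), ∫ t in (0:ℝ)..(2 * π),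
          Real.cos (z * Real.cos t - z * Real.cos (t + 2 * θ)) := by
        apply intervalIntegral.integral_congr
        intro θ _
        exact stepA θ
    _ = ∫ t in (0:ℝ)..(2 * π), ∫ θ in (0:ℝ)..(2 * π),
          Real.cos (z * Real.cos t - z * Real.cos (t + 2 * θ)) := by
        apply swap2 (fun θ t => Real.cos (z * Real.cos t - z * Real.cos (t + 2 * θ)))
        fun_prop
    _ = ∫ t in (0:ℝ)..(2 * π), Real.cos (z * Real.cos t) * (2 * π * J₀ z) := by
        apply intervalIntegral.integral_congr
        intro t _
        exact stepC t
    _ = (2 * π) ^ 2 * (J₀ (c / 2)) ^ 2 := by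
        rw [intervalIntegral.integral_mul_const, cos_cos_int, ← hz]
        ring

/-- Integrating `cos (A + c sin θ sin φ)` over one pair of angles. -/
lemma pair_cos (A c : ℝ) :
    ∫ θ in (0:ℝ)..(2 * π), ∫ φ in (0:ℝ)..(2 * π), Real.cos (A + c * (Real.sin θ * Real.sin φ))
      = Real.cos A * ((2 * π) ^ 2 * (J₀ (c / 2)) ^ 2) := by
  have inner : ∀ θ : ℝ,
      (∫ φ in (0:ℝ)..(2 * π), Real.cos (A + c * (Real.sin θ * Real.sin φ)))
      = Real.cos A * ∫ φ in (0:ℝ)..(2 * π), Real.cos (c * (Real.sin θ * Real.sin φ)) := by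
    intro θ
    calc (∫ φ in (0:ℝ)..(2 * π), Real.cos (A + c * (Real.sin θ * Real.sin φ)))
        = ∫ φ in (0:ℝ)..(2 * π),
            (Real.cos A * Real.cos (c * (Real.sin θ * Real.sin φ))
              - Real.sin A * Real.sin ((c * Real.sin θ) * Real.sin φ)) := by
          apply intervalIntegral.integral_congr
          intro φ _
          show Real.cos (A + c * (Real.sin θ * Real.sin φ))
              = Real.cos A * Real.cos (c * (Real.sin θ * Real.sin φ))
                - Real.sin A * Real.sin ((c * Real.sin θ) * Real.sin φ)
          rw [Real.cos_add, mul_assoc]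
      _ = Real.cos A * (∫ φ in (0:ℝ)..(2 * π), Real.cos (c * (Real.sin θ * Real.sin φ)))
          - Real.sin A * ∫ φ in (0:ℝ)..(2 * π), Real.sin ((c * Real.sin θ) * Real.sin φ) := by
          rw [intervalIntegral.integral_sub, intervalIntegral.integral_const_mul,
            intervalIntegral.integral_const_mul] <;>
            exact (by fun_prop : Continuous _).intervalIntegrable _ _
      _ = Real.cos A * ∫ φ in (0:ℝ)..(2 * π), Real.cos (c * (Real.sin θ * Real.sin φ)) := by
          rw [sin_sin_int]; ring
  calc (∫ θ in (0:ℝ)..(2 * π), ∫ φ in (0:ℝ)..(2 * π),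
          Real.cos (A + c * (Real.sin θ * Real.sin φ)))
      = ∫ θ in (0:ℝ)..(2 * π),
          Real.cos A * ∫ φ in (0:ℝ)..(2 * π), Real.cos (c * (Real.sin θ * Real.sin φ)) := by
        apply intervalIntegral.integral_congr
        intro θ _
        exact inner θ
    _ = Real.cos A * ∫ θ in (0:ℝ)..(2 * π), ∫ φ in (0:ℝ)..(2 * π),
          Real.cos (c * (Real.sin θ * Real.sin φ)) := intervalIntegral.integral_const_mul _ _
    _ = Real.cos A * ((2 * π) ^ 2 * (J₀ (c / 2)) ^ 2) := by rw [K_eval]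

lemma pair_cos0 (c : ℝ) :
    ∫ θ in (0:ℝ)..(2 * π), ∫ φ in (0:ℝ)..(2 * π), Real.cos (c * (Real.sin θ * Real.sin φ))
      = (2 * π) ^ 2 * (J₀ (c / 2)) ^ 2 := K_eval c

lemma J₀_neg (x : ℝ) : J₀ (-x) = J₀ x := by
  unfold J₀
  congr 1
  apply intervalIntegral.integral_congr
  intro t _
  show Real.cos (-x * Real.sin t) = Real.cos (x * Real.sin t)
  rw [neg_mul, Real.cos_neg]

theorem stmt_7 (a s₁ s₂ : ℝ) :
    E6 (fun θ₁ φ₁ θ₂ φ₂ θ₃ φ₃ =>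
      Real.cos (s₁ * a * (Real.sin θ₁ * Real.sin φ₁ - Real.sin θ₃ * Real.sin φ₃) +
        s₂ * a * (Real.sin θ₂ * Real.sin φ₂ - Real.sin θ₃ * Real.sin φ₃)))
    = (J₀ (s₁ * a / 2)) ^ 2 * (J₀ (s₂ * a / 2)) ^ 2 * (J₀ ((s₁ + s₂) * a / 2)) ^ 2 := by
  have harg : ∀ θ₁ φ₁ θ₂ φ₂ θ₃ φ₃ : ℝ,
      Real.cos (s₁ * a * (Real.sin θ₁ * Real.sin φ₁ - Real.sin θ₃ * Real.sin φ₃) +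
        s₂ * a * (Real.sin θ₂ * Real.sin φ₂ - Real.sin θ₃ * Real.sin φ₃))
      = Real.cos ((s₁ * a * (Real.sin θ₁ * Real.sin φ₁)
          + s₂ * a * (Real.sin θ₂ * Real.sin φ₂))
          + (-((s₁ + s₂) * a)) * (Real.sin θ₃ * Real.sin φ₃)) := by
    intros; congr 1; ring
  rw [E6]
  simp only [harg, pair_cos, intervalIntegral.integral_mul_const, pair_cos0]
  rw [show (-((s₁ + s₂) * a) / 2 : ℝ) = -((s₁ + s₂) * a / 2) by ring, J₀_neg]
  have hπ : π ≠ 0 := Real.pi_ne_zero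
  field_simp
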